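/- Let S and U be nonempty finite types, let P be a transition kernel on S with actions U, let r be a reward function, let 0 ≤ γ < 1 and α > 0, and let π be a policy. If Q = Γ_π Q, then ‖Q‖∞ ≤ (max_{s,u} |r s u| + γ·α·log(card U)) / (1 − γ). (Uniform boundedness of soft Q-functions, which gives the boundedness needed for the convergence of soft policy iteration.) -/

import Mathlib

/-- The soft Bellman operator of a policy `π`. -/
noncomputable def softBellman {S U : Type*} [Fintype S] [Fintype U]
    (P : S → U → S → ℝ) (r : S → U → ℝ) (γ α : ℝ) (π : S → U → ℝ)
    (Q : S → U → ℝ) : S → U → ℝ :=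
  fun s u => r s u +
    γ * ∑ s', P s u s' * ∑ u', π s' u' * (Q s' u' - α * Real.log (π s' u'))

/-- The sup norm `‖Q‖∞ = max_{s,u} |Q s u|`. -/
noncomputable def supNorm {S U : Type*} [Fintype S] [Fintype U] [Nonempty S] [Nonempty U]
    (Q : S → U → ℝ) : ℝ :=
  Finset.univ.sup' Finset.univ_nonempty (fun p : S × U => |Q p.1 p.2|)

/-- Entropy is nonnegative. -/
lemma entropy_nonneg {U : Type*} [Fintype U] (w : U → ℝ)
    (h0 : ∀ u, 0 ≤ w u) (h1 : ∑ u, w u = 1) :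
    0 ≤ -∑ u, w u * Real.log (w u) := by
  rw [neg_nonneg]
  apply Finset.sum_nonpos
  intro u _
  apply Real.mul_log_nonpos (h0 u)
  calc w u ≤ ∑ v, w v := Finset.single_le_sum (fun v _ => h0 v) (Finset.mem_univ u)
    _ = 1 := h1

/-- Entropy is at most `log (card U)`. -/
lemma entropy_le_log_card {U : Type*} [Fintype U] [Nonempty U] (w : U → ℝ)
    (h0 : ∀ u, 0 ≤ w u) (h1 : ∑ u, w u = 1) :
    -∑ u, w u * Real.log (w u) ≤ Real.log (Fintype.card U) := by
  set n : ℝ := (Fintype.card U : ℝ) with hn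
  have hnpos : 0 < n := by
    simp only [hn]
    exact_mod_cast Fintype.card_pos
  have key : ∀ u, -(w u * Real.log (w u)) ≤ w u * Real.log n + 1 / n - w u := by
    intro u
    rcases eq_or_lt_of_le (h0 u) with h | h
    · rw [← h]
      simp
      positivity
    · have hlog : Real.log (1 / (n * w u)) ≤ 1 / (n * w u) - 1 :=
        Real.log_le_sub_one_of_pos (by positivity)
      have hsplit : Real.log (1 / w u) = Real.log n + Real.log (1 / (n * w u)) := by
        rw [← Real.log_mul (ne_of_gt hnpos) (by positivity)]
        congr 1
        field_simp
      have h2 : -(w u * Real.log (w u)) = w u * Real.log (1 / w u) := by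
        rw [one_div, Real.log_inv]; ring
      rw [h2, hsplit, mul_add]
      have h3 : w u * Real.log (1 / (n * w u)) ≤ w u * (1 / (n * w u) - 1) :=
        mul_le_mul_of_nonneg_left hlog (h0 u)
      have h4 : w u * (1 / (n * w u) - 1) = 1 / n - w u := by
        field_simp
      linarith
  calc -∑ u, w u * Real.log (w u) = ∑ u, -(w u * Real.log (w u)) := by
        rw [← Finset.sum_neg_distrib]
    _ ≤ ∑ u : U, (w u * Real.log n + 1 / n - w u) := Finset.sum_le_sum (fun u _ => key u)
    _ = (∑ u, w u) * Real.log n + (Fintype.card U : ℝ) * (1 / n) - ∑ u, w u := by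
        rw [Finset.sum_sub_distrib, Finset.sum_add_distrib, ← Finset.sum_mul]
        simp [Finset.card_univ]
    _ = Real.log n := by
        rw [h1]
        field_simp
        rw [← hn]; ring
    _ = Real.log (Fintype.card U) := by rw [hn]

theorem soft_Q_function_bound
    {S U : Type*} [Fintype S] [Fintype U] [Nonempty S] [Nonempty U]
    (P : S → U → S → ℝ) (hP0 : ∀ s u s', 0 ≤ P s u s')
    (hP1 : ∀ s u, ∑ s', P s u s' = 1)
    (r : S → U → ℝ) (γ α : ℝ) (hγ0 : 0 ≤ γ) (hγ1 : γ < 1) (hα : 0 < α)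
    (π : S → U → ℝ) (hπ0 : ∀ s u, 0 ≤ π s u) (hπ1 : ∀ s, ∑ u, π s u = 1)
    (Q : S → U → ℝ) (hQ : Q = softBellman P r γ α π Q) :
    supNorm Q ≤ (supNorm r + γ * α * Real.log (Fintype.card U)) / (1 - γ) := by
  set M := supNorm Q with hM
  set R := supNorm r with hR
  set L := Real.log (Fintype.card U) with hL
  have hLnn : 0 ≤ L := Real.log_natCast_nonneg _
  have hQle : ∀ s u, |Q s u| ≤ M := fun s u =>
    Finset.le_sup' (fun p : S × U => |Q p.1 p.2|) (Finset.mem_univ (s, u))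
  have hrle : ∀ s u, |r s u| ≤ R := fun s u =>
    Finset.le_sup' (fun p : S × U => |r p.1 p.2|) (Finset.mem_univ (s, u))
  have hinner : ∀ s' : S,
      |∑ u', π s' u' * (Q s' u' - α * Real.log (π s' u'))| ≤ M + α * L := by
    intro s'
    have hsplit : ∑ u', π s' u' * (Q s' u' - α * Real.log (π s' u'))
        = (∑ u', π s' u' * Q s' u') + α * (-∑ u', π s' u' * Real.log (π s' u')) := by
      rw [mul_neg, ← sub_eq_add_neg, Finset.mul_sum, ← Finset.sum_sub_distrib]
      exact Finset.sum_congr rfl fun u' _ => by ring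
    have h1 : |∑ u', π s' u' * Q s' u'| ≤ M := by
      calc |∑ u', π s' u' * Q s' u'| ≤ ∑ u', |π s' u' * Q s' u'| :=
            Finset.abs_sum_le_sum_abs _ _
        _ = ∑ u', π s' u' * |Q s' u'| := by
            refine Finset.sum_congr rfl fun u' _ => ?_
            rw [abs_mul, abs_of_nonneg (hπ0 s' u')]
        _ ≤ ∑ u', π s' u' * M :=
            Finset.sum_le_sum fun u' _ =>
              mul_le_mul_of_nonneg_left (hQle s' u') (hπ0 s' u')
        _ = M := by rw [← Finset.sum_mul, hπ1 s', one_mul]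
    have hH0 : 0 ≤ -∑ u', π s' u' * Real.log (π s' u') :=
      entropy_nonneg _ (hπ0 s') (hπ1 s')
    have hH1 : -∑ u', π s' u' * Real.log (π s' u') ≤ L :=
      entropy_le_log_card _ (hπ0 s') (hπ1 s')
    rw [hsplit, abs_le]
    have habs := abs_le.mp h1
    constructor
    · nlinarith
    · nlinarith
  have key : ∀ s u, |Q s u| ≤ R + γ * (M + α * L) := by
    intro s u
    have heq : Q s u = r s u +
        γ * ∑ s', P s u s' * ∑ u', π s' u' * (Q s' u' - α * Real.log (π s' u')) := by
      conv_lhs => rw [hQ]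
      rfl
    have hX : |∑ s', P s u s' * ∑ u', π s' u' * (Q s' u' - α * Real.log (π s' u'))|
        ≤ M + α * L := by
      calc |∑ s', P s u s' * ∑ u', π s' u' * (Q s' u' - α * Real.log (π s' u'))|
          ≤ ∑ s', |P s u s' * ∑ u', π s' u' * (Q s' u' - α * Real.log (π s' u'))| :=
            Finset.abs_sum_le_sum_abs _ _
        _ = ∑ s', P s u s' * |∑ u', π s' u' * (Q s' u' - α * Real.log (π s' u'))| := by
            refine Finset.sum_congr rfl fun s' _ => ?_
            rw [abs_mul, abs_of_nonneg (hP0 s u s')]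
        _ ≤ ∑ s', P s u s' * (M + α * L) :=
            Finset.sum_le_sum fun s' _ =>
              mul_le_mul_of_nonneg_left (hinner s') (hP0 s u s')
        _ = M + α * L := by rw [← Finset.sum_mul, hP1 s u, one_mul]
    calc |Q s u| ≤ |r s u| + |γ * ∑ s', P s u s' *
          ∑ u', π s' u' * (Q s' u' - α * Real.log (π s' u'))| := by
          rw [heq]; exact abs_add_le _ _
      _ ≤ R + γ * (M + α * L) := by
          rw [abs_mul, abs_of_nonneg hγ0]
          exact add_le_add (hrle s u) (mul_le_mul_of_nonneg_left hX hγ0)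
  have hMle : M ≤ R + γ * (M + α * L) := by
    rw [hM, supNorm]
    exact Finset.sup'_le _ _ fun p _ => key p.1 p.2
  rw [le_div_iff₀ (by linarith)]
  nlinarith
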